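/- Let A > 0. Every solution φ of the ODE φ'' - (1/τ)·φ' - A²·τ·φ = 0 on an interval (−δ, 0) (with δ > 0) that remains bounded as τ → 0⁻ converges to a finite limit as τ → 0⁻. -/

import Mathlib

open Filter

/-- every bounded solution of φ'' - (1/τ)φ' - A²τφ = 0 on (-δ,0)
converges to a finite limit as τ → 0⁻. -/
theorem stmt5 (A δ : ℝ) (hA : 0 < A) (hδ : 0 < δ) (φ φ' φ'' : ℝ → ℝ)
    (hφ : ∀ τ ∈ Set.Ioo (-δ) 0, HasDerivAt φ (φ' τ) τ)
    (hφ' : ∀ τ ∈ Set.Ioo (-δ) 0, HasDerivAt φ' (φ'' τ) τ)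
    (hODE : ∀ τ ∈ Set.Ioo (-δ) 0, φ'' τ - (1 / τ) * φ' τ - A ^ 2 * τ * φ τ = 0)
    (hbdd : ∃ M, ∀ τ ∈ Set.Ioo (-δ) 0, |φ τ| ≤ M) :
    ∃ L, Tendsto φ (nhdsWithin 0 (Set.Iio 0)) (nhds L) := by
  obtain ⟨M, hM⟩ := hbdd
  set s : Set ℝ := Set.Ioo (-δ) 0 with hs
  have hconv : Convex ℝ s := convex_Ioo _ _
  -- ψ = φ'/τ has derivative A²·φ on s
  set ψ : ℝ → ℝ := fun τ => φ' τ / τ with hψdef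
  have hψ : ∀ τ ∈ s, HasDerivAt ψ (A ^ 2 * φ τ) τ := by
    intro τ hτ
    have hne : τ ≠ 0 := ne_of_lt hτ.2
    have h := (hφ' τ hτ).div (hasDerivAt_id τ) hne
    have heq : (φ'' τ * τ - φ' τ * 1) / τ ^ 2 = A ^ 2 * φ τ := by
      have h0 := hODE τ hτ
      have : φ'' τ = (1 / τ) * φ' τ + A ^ 2 * τ * φ τ := by linarith
      rw [this]; field_simp; ring
    simp only [id_eq] at h
    rw [heq] at h
    exact h
  -- |φ| ≤ M on s, with M ≥ 0
  have hτ₀ : (-(δ / 2)) ∈ s := ⟨by linarith, by linarith⟩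
  have hM0 : 0 ≤ M := le_trans (abs_nonneg _) (hM _ hτ₀)
  -- ψ is Lipschitz with constant A²M on s, hence bounded there
  have hψlip : ∀ x ∈ s, ∀ y ∈ s, |ψ y - ψ x| ≤ A ^ 2 * M * |y - x| := by
    intro x hx y hy
    have := Convex.norm_image_sub_le_of_norm_hasDerivWithin_le
      (f := ψ) (f' := fun τ => A ^ 2 * φ τ) (C := A ^ 2 * M)
      (fun z hz => (hψ z hz).hasDerivWithinAt)
      (fun z hz => by
        simp only [Real.norm_eq_abs, abs_mul, abs_pow, sq_abs]
        exact mul_le_mul_of_nonneg_left (hM z hz) (by positivity)) hconv hx hy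
    simpa using this
  set C : ℝ := |ψ (-(δ / 2))| + A ^ 2 * M * δ with hC
  have hψbdd : ∀ τ ∈ s, |ψ τ| ≤ C := by
    intro τ hτ
    have h1 := hψlip _ hτ₀ τ hτ
    have h2 : |τ - -(δ / 2)| ≤ δ := by
      rw [abs_le]
      constructor <;> [nlinarith [hτ.1, hτ.2]; nlinarith [hτ.1, hτ.2]]
    have h3 : |ψ τ| - |ψ (-(δ / 2))| ≤ |ψ τ - ψ (-(δ / 2))| := abs_sub_abs_le_abs_sub _ _
    have h4 : A ^ 2 * M * |τ - -(δ / 2)| ≤ A ^ 2 * M * δ :=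
      mul_le_mul_of_nonneg_left h2 (by positivity)
    rw [hC]; linarith
  -- hence φ' is bounded by K := δ·C on s
  set K : ℝ := δ * C with hK
  have hC0 : 0 ≤ C := le_trans (abs_nonneg _) (hψbdd _ hτ₀)
  have hK0 : 0 ≤ K := by positivity
  have hφ'bdd : ∀ τ ∈ s, |φ' τ| ≤ K := by
    intro τ hτ
    have hne : τ ≠ 0 := ne_of_lt hτ.2
    have : φ' τ = τ * ψ τ := by rw [hψdef]; field_simp
    rw [this, abs_mul]
    have hτδ : |τ| ≤ δ := by
      rw [abs_le]; constructor <;> [linarith [hτ.1]; linarith [hτ.2]]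
    exact mul_le_mul hτδ (hψbdd τ hτ) (abs_nonneg _) (le_of_lt hδ)
  -- so φ is K-Lipschitz on s
  have hφlip : ∀ x ∈ s, ∀ y ∈ s, |φ y - φ x| ≤ K * |y - x| := by
    intro x hx y hy
    have := Convex.norm_image_sub_le_of_norm_hasDerivWithin_le
      (f := φ) (f' := φ') (C := K)
      (fun z hz => (hφ z hz).hasDerivWithinAt)
      (fun z hz => hφ'bdd z hz) hconv hx hy
    simpa using this
  -- the filter at 0⁻
  haveI : NeBot (nhdsWithin (0 : ℝ) (Set.Iio 0)) := nhdsLT_neBot 0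
  have hcauchy : Cauchy (Filter.map φ (nhdsWithin 0 (Set.Iio 0))) := by
    rw [Metric.cauchy_iff]
    refine ⟨Filter.map_neBot, fun ε hε => ?_⟩
    set η : ℝ := min δ (ε / (K + 1)) with hη
    have hη0 : 0 < η := lt_min hδ (by positivity)
    refine ⟨φ '' Set.Ioo (-η) 0, ?_, ?_⟩
    · exact Filter.image_mem_map (Ioo_mem_nhdsLT (by linarith))
    · rintro x ⟨a, ha, rfl⟩ y ⟨b, hb, rfl⟩
      have haS : a ∈ s := ⟨lt_of_le_of_lt (neg_le_neg (min_le_left _ _)) ha.1, ha.2⟩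
      have hbS : b ∈ s := ⟨lt_of_le_of_lt (neg_le_neg (min_le_left _ _)) hb.1, hb.2⟩
      have hab : |a - b| < η := by
        rw [abs_sub_lt_iff]
        constructor <;> nlinarith [ha.1, ha.2, hb.1, hb.2]
      have h1 : |φ a - φ b| ≤ K * |a - b| := hφlip b hbS a haS
      have h2 : K * |a - b| ≤ K * η := mul_le_mul_of_nonneg_left (le_of_lt hab) hK0
      have h3 : K * η ≤ K * (ε / (K + 1)) :=
        mul_le_mul_of_nonneg_left (min_le_right _ _) hK0
      have h4 : K * (ε / (K + 1)) < ε := by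
        rw [mul_comm, div_mul_eq_mul_div, div_lt_iff₀ (by positivity : (0:ℝ) < K + 1)]
        nlinarith
      calc dist (φ a) (φ b) = |φ a - φ b| := Real.dist_eq _ _
        _ < ε := by linarith
  obtain ⟨L, hL⟩ := CompleteSpace.complete hcauchy
  exact ⟨L, hL⟩
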